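/- Let g : ℝ → ℝ be continuous, 1-periodic, with ∫₀¹ g = 0, and let φ ∈ C¹([0,L]) where L = Nl for positive integers N (so [0,L] is exactly covered by full cells). Then ∑_{n=0}^{N−1} ∫_{nl}^{(n+1)l} φ(x) (1/l) g(x/l) dx → p₀ ∫₀^L φ'(x) dx as l = L/N → 0, with p₀ = ∫₀¹ y g(y) dy. -/

import Mathlib

open MeasureTheory Filter Topology Real

/-- A continuous periodic function is globally bounded. -/
lemma per_bound (h : ℝ → ℝ) (hh : Continuous h) (hper : Function.Periodic h 1) :
    ∃ M : ℝ, 0 ≤ M ∧ ∀ y, |h y| ≤ M := by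
  obtain ⟨C, hC⟩ := (isCompact_Icc (a := (0:ℝ)) (b := 1)).exists_bound_of_continuousOn
    hh.continuousOn
  refine ⟨max C 0, le_max_right _ _, fun y => ?_⟩
  have h1 : h y = h (Int.fract y) := by
    have := hper.sub_int_mul_eq (x := y) (n := ⌊y⌋)
    rw [mul_one] at this
    rw [Int.fract, this]
  rw [h1]
  have hf : Int.fract y ∈ Set.Icc (0:ℝ) 1 :=
    ⟨Int.fract_nonneg y, (Int.fract_lt_one y).le⟩
  exact le_trans (hC _ hf) (le_max_left _ _)

/-- Weak convergence of rescaled periodic functions against a continuous test function. -/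
lemma weak_conv (h ψ : ℝ → ℝ) (L : ℝ) (hL : 0 < L) (hh : Continuous h)
    (hper : Function.Periodic h 1) (hψ : Continuous ψ) :
    Tendsto (fun N : ℕ => ∫ x in (0:ℝ)..L, ψ x * h (x * (N:ℝ) / L)) atTop
      (𝓝 ((∫ y in (0:ℝ)..1, h y) * ∫ x in (0:ℝ)..L, ψ x)) := by
  obtain ⟨M, hM0, hM⟩ := per_bound h hh hper
  rw [Metric.tendsto_atTop]
  intro ε hε
  set ε' : ℝ := ε / (M * L + 1) with hε'def
  have hML : 0 < M * L + 1 := by positivity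
  have hε' : 0 < ε' := div_pos hε hML
  have hUC : UniformContinuousOn ψ (Set.Icc 0 L) :=
    (isCompact_Icc).uniformContinuousOn_of_continuous hψ.continuousOn
  rw [Metric.uniformContinuousOn_iff] at hUC
  obtain ⟨δ, hδ, hUC⟩ := hUC ε' hε'
  obtain ⟨N₀, hN₀⟩ := exists_nat_gt (L / δ)
  refine ⟨max N₀ 1, fun N hN => ?_⟩
  have hN1 : 1 ≤ N := le_trans (le_max_right _ _) hN
  have hNpos : (0:ℝ) < (N:ℝ) := by exact_mod_cast hN1
  have hNne : (N:ℝ) ≠ 0 := ne_of_gt hNpos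
  set l : ℝ := L / N with hldef
  have hl : 0 < l := div_pos hL hNpos
  have hlδ : l < δ := by
    have hN₀N : (N₀:ℝ) ≤ (N:ℝ) := by exact_mod_cast le_trans (le_max_left _ _) hN
    have hlt : L / δ < (N:ℝ) := lt_of_lt_of_le hN₀ hN₀N
    rw [hldef, div_lt_iff₀ hNpos]
    calc L = (L / δ) * δ := by field_simp
    _ < (N:ℝ) * δ := mul_lt_mul_of_pos_right hlt hδ
    _ = δ * N := mul_comm _ _
  have harg : Continuous fun x : ℝ => x * (N:ℝ) / L :=
    (continuous_id.mul continuous_const).div_const L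
  have hcont : Continuous fun x => ψ x * h (x * (N:ℝ) / L) := hψ.mul (hh.comp harg)
  have hadj : ∀ (f : ℝ → ℝ), Continuous f →
      ∫ x in (0:ℝ)..L, f x = ∑ n ∈ Finset.range N, ∫ x in ((n:ℝ) * l)..(((n:ℝ)+1) * l), f x := by
    intro f hf
    have := intervalIntegral.sum_integral_adjacent_intervals
      (a := fun k : ℕ => (k:ℝ) * l) (n := N) (f := f) (μ := volume)
      (fun k _ => hf.intervalIntegrable _ _)
    simp only [Nat.cast_zero, zero_mul, Nat.cast_add, Nat.cast_one] at this
    rw [show (N:ℝ) * l = L from by rw [hldef]; field_simp] at this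
    exact this.symm
  have cellh : ∀ n : ℕ, ∫ x in ((n:ℝ) * l)..(((n:ℝ)+1) * l), h (x * (N:ℝ) / L)
      = l * ∫ y in (0:ℝ)..1, h y := by
    intro n
    have hc : (N:ℝ) / L ≠ 0 := div_ne_zero hNne (ne_of_gt hL)
    have harg2 : ∀ x : ℝ, x * (N:ℝ) / L = x * ((N:ℝ)/L) := fun x => by ring
    simp_rw [harg2]
    rw [intervalIntegral.integral_comp_mul_right h hc]
    have e1 : (n:ℝ) * l * ((N:ℝ)/L) = (n:ℝ) := by rw [hldef]; field_simp
    have e2 : ((n:ℝ)+1) * l * ((N:ℝ)/L) = (n:ℝ) + 1 := by rw [hldef]; field_simp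
    rw [e1, e2, hper.intervalIntegral_add_eq (n:ℝ) 0, zero_add]
    have e3 : ((N:ℝ)/L)⁻¹ = l := by rw [hldef]; field_simp
    rw [e3, smul_eq_mul]
  have key : ∀ n ∈ Finset.range N,
      |(∫ x in ((n:ℝ) * l)..(((n:ℝ)+1) * l), ψ x * h (x * (N:ℝ) / L)) -
        (∫ y in (0:ℝ)..1, h y) * (∫ x in ((n:ℝ) * l)..(((n:ℝ)+1) * l), ψ x)|
      ≤ ε' * M * l := by
    intro n hn
    have hnN : (n:ℝ) + 1 ≤ (N:ℝ) := by
      have : n + 1 ≤ N := Finset.mem_range.mp hn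
      exact_mod_cast this
    set a : ℝ := (n:ℝ) * l with hadef
    set b : ℝ := ((n:ℝ)+1) * l with hbdef
    have hab : a ≤ b := by
      have : (n:ℝ) ≤ (n:ℝ) + 1 := by linarith
      exact mul_le_mul_of_nonneg_right this hl.le
    have hsub : Set.uIoc a b ⊆ Set.Icc 0 L := by
      rw [Set.uIoc_of_le hab]
      intro x hx
      constructor
      · have : (0:ℝ) ≤ a := mul_nonneg (Nat.cast_nonneg n) hl.le
        linarith [hx.1]
      · have hbL : b ≤ L := by
          calc b = ((n:ℝ)+1) * l := rfl
          _ ≤ (N:ℝ) * l := mul_le_mul_of_nonneg_right hnN hl.le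
          _ = L := by rw [hldef]; field_simp
        linarith [hx.2]
    set A : ℝ := ∫ x in a..b, ψ x with hA
    have hrw : (∫ x in a..b, ψ x * h (x * (N:ℝ) / L)) -
        (∫ y in (0:ℝ)..1, h y) * A
        = ∫ x in a..b, (ψ x - A / l) * h (x * (N:ℝ) / L) := by
      have hint1 : IntervalIntegrable (fun x => ψ x * h (x * (N:ℝ) / L)) volume a b :=
        hcont.intervalIntegrable _ _
      have hint2 : IntervalIntegrable (fun x => (A / l) * h (x * (N:ℝ) / L)) volume a b :=
        (continuous_const.mul (hh.comp harg)).intervalIntegrable _ _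
      have hdiff : ∫ x in a..b, (ψ x - A / l) * h (x * (N:ℝ) / L)
          = (∫ x in a..b, ψ x * h (x * (N:ℝ) / L))
            - ∫ x in a..b, (A / l) * h (x * (N:ℝ) / L) := by
        rw [← intervalIntegral.integral_sub hint1 hint2]
        congr 1; ext x; ring
      rw [hdiff, intervalIntegral.integral_const_mul, cellh n]
      have : A / l * (l * ∫ y in (0:ℝ)..1, h y) = (∫ y in (0:ℝ)..1, h y) * A := by
        field_simp
      rw [this]
    rw [hrw]
    have hblen : b - a = l := by rw [hadef, hbdef]; ring
    have hpt : ∀ x ∈ Set.uIoc a b, ‖(ψ x - A / l) * h (x * (N:ℝ) / L)‖ ≤ ε' * M := by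
      intro x hx
      rw [Real.norm_eq_abs, abs_mul]
      have hx' : x ∈ Set.Icc 0 L := hsub hx
      have hxab : x ∈ Set.Ioc a b := by rwa [Set.uIoc_of_le hab] at hx
      have hψbound : |ψ x - A / l| ≤ ε' := by
        have h1 : |ψ x * l - A| ≤ ε' * l := by
          have heq : ψ x * l - A = ∫ t in a..b, (ψ x - ψ t) := by
            rw [intervalIntegral.integral_sub
              ((continuous_const).intervalIntegrable _ _) (hψ.intervalIntegrable _ _)]
            rw [intervalIntegral.integral_const, hblen, smul_eq_mul]
            rw [hA]; ring
          rw [heq]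
          have hpt2 : ∀ t ∈ Set.uIoc a b, ‖ψ x - ψ t‖ ≤ ε' := by
            intro t ht
            have ht' : t ∈ Set.Icc 0 L := hsub ht
            have htab : t ∈ Set.Ioc a b := by rwa [Set.uIoc_of_le hab] at ht
            rw [Real.norm_eq_abs]
            have hdist : dist x t < δ := by
              rw [Real.dist_eq]
              have habs : |x - t| ≤ b - a := by
                rw [abs_sub_le_iff]
                constructor <;> linarith [hxab.1, hxab.2, htab.1, htab.2]
              rw [hblen] at habs
              linarith
            have := hUC x hx' t ht' hdist
            rw [Real.dist_eq] at this
            linarith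
          have hbd2 := intervalIntegral.norm_integral_le_of_norm_le_const hpt2
          rw [Real.norm_eq_abs, hblen, abs_of_pos hl] at hbd2
          exact hbd2
        have heq2 : ψ x - A / l = (ψ x * l - A) / l := by field_simp
        rw [heq2, abs_div, abs_of_pos hl]
        exact (div_le_iff₀ hl).mpr (by linarith)
      exact mul_le_mul hψbound (hM _) (abs_nonneg _) hε'.le
    have hbd := intervalIntegral.norm_integral_le_of_norm_le_const hpt
    rw [Real.norm_eq_abs, hblen, abs_of_pos hl] at hbd
    exact hbd
  rw [Real.dist_eq, hadj _ hcont, hadj _ hψ, Finset.mul_sum, ← Finset.sum_sub_distrib]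
  calc |∑ n ∈ Finset.range N, ((∫ x in ((n:ℝ)*l)..(((n:ℝ)+1)*l), ψ x * h (x * (N:ℝ)/L))
          - (∫ y in (0:ℝ)..1, h y) * (∫ x in ((n:ℝ)*l)..(((n:ℝ)+1)*l), ψ x))|
      ≤ ∑ n ∈ Finset.range N, |(∫ x in ((n:ℝ)*l)..(((n:ℝ)+1)*l), ψ x * h (x * (N:ℝ)/L))
          - (∫ y in (0:ℝ)..1, h y) * (∫ x in ((n:ℝ)*l)..(((n:ℝ)+1)*l), ψ x)| :=
        Finset.abs_sum_le_sum_abs _ _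
  _ ≤ ∑ _n ∈ Finset.range N, ε' * M * l := Finset.sum_le_sum key
  _ = (N:ℝ) * (ε' * M * l) := by
      rw [Finset.sum_const, Finset.card_range, nsmul_eq_mul]
  _ = ε' * M * L := by rw [hldef]; field_simp
  _ < ε := by
      have hεeq : ε' * (M * L + 1) = ε := div_mul_cancel₀ _ (ne_of_gt hML)
      nlinarith

/-- bulk polarization theorem in one dimension on a commensurate
domain `[0, L]`, `L = N l`: the cell-wise sums converge to `p₀ ∫₀^L φ'`. -/
theorem stmt_9 (g φ : ℝ → ℝ) (L : ℝ) (hL : 0 < L) (hg : Continuous g)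
    (hper : ∀ x, g (x + 1) = g x) (hmean : ∫ y in (0:ℝ)..1, g y = 0)
    (hφ : ContDiff ℝ 1 φ) :
    Tendsto (fun N : ℕ => ∑ n ∈ Finset.range N,
        ∫ x in ((n : ℝ) * (L / (N : ℝ)))..(((n : ℝ) + 1) * (L / (N : ℝ))),
          φ x * (((N : ℝ) / L) * g (x * (N : ℝ) / L)))
      atTop (𝓝 ((∫ y in (0:ℝ)..1, y * g y) * ∫ x in (0:ℝ)..L, deriv φ x)) := by
  have hφd : Differentiable ℝ φ := hφ.differentiable one_ne_zero
  have hφ' : Continuous (deriv φ) := hφ.continuous_deriv le_rfl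
  set G : ℝ → ℝ := fun x => ∫ t in (0:ℝ)..x, g t with hGdef
  have hGderiv : ∀ x : ℝ, HasDerivAt G (g x) x := fun x =>
    (hg.integral_hasStrictDerivAt 0 x).hasDerivAt
  have hGcont : Continuous G :=
    continuous_iff_continuousAt.mpr fun x => (hGderiv x).continuousAt
  have hG1 : G 1 = 0 := hmean
  have hgper : Function.Periodic g 1 := hper
  have hGper : Function.Periodic G 1 := by
    intro x
    have h1 := intervalIntegral.integral_add_adjacent_intervals
      (a := (0:ℝ)) (b := x) (c := x+1) (μ := volume)
      (hg.intervalIntegrable _ _) (hg.intervalIntegrable _ _)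
    have h2 : ∫ t in x..(x+1), g t = 0 := by
      rw [hgper.intervalIntegral_add_eq x 0, zero_add]; exact hmean
    show (∫ t in (0:ℝ)..(x+1), g t) = ∫ t in (0:ℝ)..x, g t
    rw [← h1, h2, add_zero]
  have hG0 : G 0 = 0 := intervalIntegral.integral_same
  have hGnat : ∀ N : ℕ, G (N:ℝ) = 0 := by
    intro N
    have h3 := hGper.nat_mul_eq (n := N)
    rw [mul_one] at h3
    rw [h3, hG0]
  have hp0 : ∫ y in (0:ℝ)..1, y * g y = -∫ y in (0:ℝ)..1, G y := by
    have hibp := intervalIntegral.integral_mul_deriv_eq_deriv_mul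
      (u := fun y : ℝ => y) (v := G) (u' := fun _ => (1:ℝ)) (v' := g) (a := 0) (b := 1)
      (fun x _ => hasDerivAt_id x) (fun x _ => hGderiv x)
      (continuous_const.intervalIntegrable _ _) (hg.intervalIntegrable _ _)
    simpa [hG1, hG0] using hibp
  have hEq : ∀ᶠ N : ℕ in atTop, (∑ n ∈ Finset.range N,
        ∫ x in ((n : ℝ) * (L / (N : ℝ)))..(((n : ℝ) + 1) * (L / (N : ℝ))),
          φ x * (((N : ℝ) / L) * g (x * (N : ℝ) / L)))
      = -∫ x in (0:ℝ)..L, deriv φ x * G (x * (N:ℝ) / L) := by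
    filter_upwards [eventually_ge_atTop 1] with N hN1
    have hNpos : (0:ℝ) < (N:ℝ) := by exact_mod_cast hN1
    have hNne : (N:ℝ) ≠ 0 := ne_of_gt hNpos
    have harg : Continuous fun x : ℝ => x * (N:ℝ) / L :=
      (continuous_id.mul continuous_const).div_const L
    have hintg : Continuous fun x => φ x * (((N:ℝ)/L) * g (x * (N:ℝ)/L)) :=
      hφ.continuous.mul (continuous_const.mul (hg.comp harg))
    have hsplit : ∑ n ∈ Finset.range N,
        (∫ x in ((n : ℝ) * (L / (N : ℝ)))..(((n : ℝ) + 1) * (L / (N : ℝ))),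
          φ x * (((N : ℝ) / L) * g (x * (N : ℝ) / L)))
        = ∫ x in (0:ℝ)..L, φ x * (((N:ℝ)/L) * g (x * (N:ℝ)/L)) := by
      have h4 := intervalIntegral.sum_integral_adjacent_intervals
        (a := fun k : ℕ => (k:ℝ) * (L / (N:ℝ))) (n := N)
        (f := fun x => φ x * (((N:ℝ)/L) * g (x * (N:ℝ)/L))) (μ := volume)
        (fun k _ => hintg.intervalIntegrable _ _)
      simp only [Nat.cast_zero, zero_mul, Nat.cast_add, Nat.cast_one] at h4
      rw [show (N:ℝ) * (L / (N:ℝ)) = L from by field_simp] at h4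
      exact h4
    rw [hsplit]
    have hvd : ∀ x : ℝ, HasDerivAt (fun x => G (x * (N:ℝ) / L))
        (((N:ℝ)/L) * g (x * (N:ℝ)/L)) x := by
      intro x
      have h1 : HasDerivAt (fun y : ℝ => y * (N:ℝ) / L) ((N:ℝ)/L) x := by
        simpa using ((hasDerivAt_id x).mul_const (N:ℝ)).div_const L
      have h2 := (hGderiv (x * (N:ℝ) / L)).comp x h1
      simpa [Function.comp_def, mul_comm] using h2
    have hibp2 := intervalIntegral.integral_mul_deriv_eq_deriv_mul
      (u := φ) (v := fun x => G (x * (N:ℝ) / L)) (u' := deriv φ)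
      (v' := fun x => ((N:ℝ)/L) * g (x * (N:ℝ)/L)) (a := 0) (b := L)
      (fun x _ => (hφd x).hasDerivAt) (fun x _ => hvd x)
      (hφ'.intervalIntegrable _ _)
      ((continuous_const.mul (hg.comp harg)).intervalIntegrable _ _)
    rw [hibp2]
    beta_reduce
    rw [show L * (N:ℝ) / L = (N:ℝ) from by field_simp, hGnat N,
      show (0:ℝ) * (N:ℝ) / L = 0 from by ring, hG0]
    ring
  have hlim := (weak_conv G (deriv φ) L hL hGcont hGper hφ').neg
  rw [hp0, neg_mul]
  rw [← neg_neg ((∫ y in (0:ℝ)..1, G y) * ∫ x in (0:ℝ)..L, deriv φ x)] at hlim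
  have hlim2 : Tendsto (fun N : ℕ => -∫ x in (0:ℝ)..L, deriv φ x * G (x * (N:ℝ) / L))
      atTop (𝓝 (-((∫ y in (0:ℝ)..1, G y) * ∫ x in (0:ℝ)..L, deriv φ x))) := by
    simpa using (weak_conv G (deriv φ) L hL hGcont hGper hφ').neg
  exact Tendsto.congr' (Filter.EventuallyEq.symm hEq) hlim2
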